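/- Given m+1 pairs of real numbers (x_j, y_j), j = 1, ..., m+1, with -1 < x_1 < x_2 < ... < x_{m+1} < 1, there exists a unique function F in Ω_m such that F(x_j) = y_j for all j. -/

import Mathlib

open Polynomial Real

noncomputable def parPol (m : ℕ) (c : Fin (m+1) → ℝ) (p : ℕ) : Polynomial ℝ :=
  ∑ k : Fin (m+1), if (k:ℕ) % 2 = p % 2 then C (c k) * X^(k:ℕ) else 0

lemma parPol_eval (m : ℕ) (c : Fin (m+1) → ℝ) (p : ℕ) (t : ℝ) :
    (parPol m c p).eval t = ∑ k : Fin (m+1), if (k:ℕ) % 2 = p % 2 then c k * t^(k:ℕ) else 0 := by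
  rw [parPol, eval_finset_sum]
  apply Finset.sum_congr rfl
  intro k _
  by_cases h : (k:ℕ) % 2 = p % 2 <;> simp [h]

lemma parPol_degree (m : ℕ) (c : Fin (m+1) → ℝ) (p : ℕ) :
    (parPol m c p).degree ≤ (m : ℕ) := by
  refine le_trans (degree_sum_le _ _) ?_
  rw [Finset.sup_le_iff]
  intro k _
  by_cases h : (k:ℕ) % 2 = p % 2
  · simp only [h, if_true]
    refine le_trans (degree_C_mul_X_pow_le _ _) ?_
    exact_mod_cast Nat.lt_succ_iff.1 k.isLt
  · simp [h]

lemma parPol_degree_lt (m : ℕ) (c : Fin (m+1) → ℝ) :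
    (parPol m c (m+1)).degree < (m : ℕ) := by
  refine lt_of_le_of_lt (degree_sum_le _ _) ?_
  rw [Finset.sup_lt_iff (by exact_mod_cast WithBot.bot_lt_coe m)]
  intro k _
  by_cases h : (k:ℕ) % 2 = (m+1) % 2
  · simp only [h, if_true]
    refine lt_of_le_of_lt (degree_C_mul_X_pow_le _ _) ?_
    have hk : (k:ℕ) < m := by
      have h2 := k.isLt
      omega
    exact_mod_cast hk
  · simp only [h, if_false, degree_zero]
    exact_mod_cast WithBot.bot_lt_coe m

lemma parPol_parity (m : ℕ) (c : Fin (m+1) → ℝ) (p : ℕ) (t : ℝ) :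
    (parPol m c p).eval (-t) = (-1:ℝ)^p * (parPol m c p).eval t := by
  rw [parPol_eval, parPol_eval, Finset.mul_sum]
  apply Finset.sum_congr rfl
  intro k _
  by_cases h : (k:ℕ) % 2 = p % 2
  · simp only [h, if_true]
    have : (-1:ℝ)^(k:ℕ) = (-1:ℝ)^p := by
      conv_lhs => rw [← Nat.div_add_mod (k:ℕ) 2]
      conv_rhs => rw [← Nat.div_add_mod p 2]
      rw [h, pow_add, pow_add, pow_mul, pow_mul]
      norm_num
    rw [neg_pow, this]
    ring
  · simp [h]

lemma parPol_coeff (m : ℕ) (c : Fin (m+1) → ℝ) (p : ℕ) (k0 : Fin (m+1)) :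
    (parPol m c p).coeff (k0:ℕ) = if (k0:ℕ) % 2 = p % 2 then c k0 else 0 := by
  rw [parPol, finset_sum_coeff]
  rw [Finset.sum_eq_single k0]
  · by_cases h : (k0:ℕ) % 2 = p % 2 <;> simp [h, coeff_C_mul, coeff_X_pow]
  · intro k _ hk
    have hk' : (k:ℕ) ≠ (k0:ℕ) := fun h => hk (Fin.ext h)
    by_cases h : (k:ℕ) % 2 = p % 2 <;> simp [h, coeff_C_mul, coeff_X_pow, hk', Ne.symm hk']
  · intro h
    exact absurd (Finset.mem_univ k0) h


lemma key_zero (m : ℕ) (x : Fin (m+1) → ℝ) (hinj : Function.Injective x)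
    (hx1 : ∀ j, x j ∈ Set.Ioo (-1:ℝ) 1) (B0 B1 : Polynomial ℝ)
    (hd0 : B0.degree ≤ (m:ℕ)) (hd1 : B1.degree < (m:ℕ))
    (hp0 : ∀ t : ℝ, B0.eval (-t) = (-1:ℝ)^m * B0.eval t)
    (hp1 : ∀ t : ℝ, B1.eval (-t) = (-1:ℝ)^(m+1) * B1.eval t)
    (h0 : ∀ j, B0.eval (x j) + Real.sqrt (1 - (x j)^2) * B1.eval (x j) = 0) :
    B0 = 0 ∧ B1 = 0 := by
  set P : Polynomial ℝ := B0^2 - (1 - X^2) * B1^2 with hPdef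
  -- basic facts about the nodes
  have hs2 : ∀ j, (Real.sqrt (1 - (x j)^2))^2 = 1 - (x j)^2 := by
    intro j
    apply Real.sq_sqrt
    nlinarith [(hx1 j).1, (hx1 j).2]
  have hspos : ∀ j, 0 < Real.sqrt (1 - (x j)^2) := by
    intro j
    apply Real.sqrt_pos.2
    nlinarith [(hx1 j).1, (hx1 j).2]
  -- P is even (as eval)
  have hPeven : ∀ t : ℝ, P.eval (-t) = P.eval t := by
    intro t
    have h1 : ((-1:ℝ)^m)^2 = 1 := by
      rcases Nat.even_or_odd m with h | h
      · rw [h.neg_one_pow]; norm_num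
      · rw [h.neg_one_pow]; norm_num
    have h2 : ((-1:ℝ)^(m+1))^2 = 1 := by
      rcases Nat.even_or_odd (m+1) with h | h
      · rw [h.neg_one_pow]; norm_num
      · rw [h.neg_one_pow]; norm_num
    simp only [hPdef, eval_sub, eval_mul, eval_pow, eval_one, eval_X, hp0, hp1,
      mul_pow, h1, h2, one_mul, neg_neg]
    ring
  -- P vanishes at each node
  have hProot : ∀ j, P.eval (x j) = 0 := by
    intro j
    have h := h0 j
    have hB0 : B0.eval (x j) = - (Real.sqrt (1 - (x j)^2) * B1.eval (x j)) := by linarith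
    simp only [hPdef, eval_sub, eval_mul, eval_pow, eval_one, eval_X, hB0]
    linear_combination (B1.eval (x j))^2 * hs2 j
  -- at a symmetric pair of nodes, B0 and B1 vanish
  have hdouble : ∀ (j k : Fin (m+1)), x k = - x j →
      B0.eval (x j) = 0 ∧ B1.eval (x j) = 0 := by
    intro j k hjk
    have hj := h0 j
    have hk := h0 k
    rw [hjk, neg_sq, hp0, hp1] at hk
    have hsgn : ((-1:ℝ)^(m+1)) = -((-1:ℝ)^m) := by ring
    rw [hsgn] at hk
    -- hk : (-1)^m * B0(xj) + s * (-(-1)^m * B1(xj)) = 0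
    have hm : ((-1:ℝ)^m) ≠ 0 := by positivity
    have h2 : B0.eval (x j) - Real.sqrt (1 - (x j)^2) * B1.eval (x j) = 0 := by
      have : (-1:ℝ)^m * (B0.eval (x j) - Real.sqrt (1 - (x j)^2) * B1.eval (x j)) = 0 := by
        linarith [hk]
      rcases mul_eq_zero.1 this with h | h
      · exact absurd h hm
      · exact h
    have hB1 : B1.eval (x j) = 0 := by
      have hs := hspos j
      nlinarith [hj, h2]
    constructor
    · nlinarith [hj, hB1]
    · exact hB1
  classical
  -- P must be zero
  have hP0 : P = 0 := by
    by_contra hP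
    set R : Multiset ℝ := (Finset.univ.val.map x) + (Finset.univ.val.map (fun j => -(x j))) with hRdef
    have hcard : Multiset.card R = 2 * (m + 1) := by
      simp only [hRdef, Multiset.card_add, Multiset.card_map]
      simp [Nat.two_mul]
    have hnod1 : (Finset.univ.val.map x).Nodup := Finset.univ.nodup.map hinj
    have hnod2 : (Finset.univ.val.map (fun j => -(x j))).Nodup :=
      Finset.univ.nodup.map (neg_injective.comp hinj)
    have hle : R ≤ P.roots := by
      rw [Multiset.le_iff_count]
      intro a
      rw [Polynomial.count_roots]
      have hc1 : (Finset.univ.val.map x).count a ≤ 1 :=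
        Multiset.nodup_iff_count_le_one.1 hnod1 a
      have hc2 : (Finset.univ.val.map (fun j => -(x j))).count a ≤ 1 :=
        Multiset.nodup_iff_count_le_one.1 hnod2 a
      have hmem1 : a ∈ (Finset.univ.val.map x) ↔ ∃ j, x j = a := by
        constructor
        · intro hm
          obtain ⟨j, -, hj⟩ := Multiset.mem_map.1 hm
          exact ⟨j, hj⟩
        · rintro ⟨j, hj⟩
          exact Multiset.mem_map.2 ⟨j, (by rw [Finset.mem_val]; exact Finset.mem_univ j), hj⟩
      have hmem2 : a ∈ (Finset.univ.val.map (fun j => -(x j))) ↔ ∃ k, x k = -a := by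
        constructor
        · intro hm
          obtain ⟨j, -, hj⟩ := Multiset.mem_map.1 hm
          exact ⟨j, by linarith⟩
        · rintro ⟨j, hj⟩
          exact Multiset.mem_map.2 ⟨j, (by rw [Finset.mem_val]; exact Finset.mem_univ j), by linarith⟩
      rw [hRdef, Multiset.count_add]
      by_cases h1 : ∃ j, x j = a <;> by_cases h2 : ∃ k, x k = -a
      · -- double root
        obtain ⟨j, hj⟩ := h1
        obtain ⟨k, hk⟩ := h2
        have hjk : x k = - x j := by rw [hj, hk]
        obtain ⟨hB0a, hB1a⟩ := hdouble j k hjk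
        rw [hj] at hB0a hB1a
        have d0 : (X - C a) ∣ B0 := dvd_iff_isRoot.2 hB0a
        have d1 : (X - C a) ∣ B1 := dvd_iff_isRoot.2 hB1a
        have hdvd : (X - C a)^2 ∣ P := by
          apply dvd_sub
          · exact pow_dvd_pow_of_dvd d0 2
          · exact Dvd.dvd.mul_left (pow_dvd_pow_of_dvd d1 2) _
        have : 2 ≤ rootMultiplicity a P := (le_rootMultiplicity_iff hP).2 hdvd
        omega
      · have : (Finset.univ.val.map (fun j => -(x j))).count a = 0 :=
          Multiset.count_eq_zero.2 (fun hm => h2 (hmem2.1 hm))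
        rw [this]
        obtain ⟨j, hj⟩ := h1
        have : 0 < rootMultiplicity a P := (rootMultiplicity_pos hP).2 (hj ▸ hProot j)
        omega
      · have : (Finset.univ.val.map x).count a = 0 :=
          Multiset.count_eq_zero.2 (fun hm => h1 (hmem1.1 hm))
        rw [this]
        obtain ⟨k, hk⟩ := h2
        have hroot : P.IsRoot a := by
          have ha : a = -(x k) := by rw [hk, neg_neg]
          rw [IsRoot, ha, hPeven, hProot k]
        have : 0 < rootMultiplicity a P := (rootMultiplicity_pos hP).2 hroot
        omega
      · have e1 : (Finset.univ.val.map x).count a = 0 :=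
          Multiset.count_eq_zero.2 (fun hm => h1 (hmem1.1 hm))
        have e2 : (Finset.univ.val.map (fun j => -(x j))).count a = 0 :=
          Multiset.count_eq_zero.2 (fun hm => h2 (hmem2.1 hm))
        rw [e1, e2]
        omega
    have hbig : 2 * (m + 1) ≤ P.natDegree := by
      calc 2 * (m + 1) = Multiset.card R := hcard.symm
        _ ≤ Multiset.card P.roots := Multiset.card_le_card hle
        _ ≤ P.natDegree := card_roots' P
    have h0d : B0.natDegree ≤ m := natDegree_le_iff_degree_le.2 hd0
    have hsq : (B0^2).natDegree ≤ 2*m := by rw [natDegree_pow]; omega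
    have hrhs : ((1 - X^2)*B1^2).natDegree ≤ 2*m := by
      by_cases hB1 : B1 = 0
      · simp [hB1]
      · have h1d : B1.natDegree < m := (natDegree_lt_iff_degree_lt hB1).2 hd1
        refine le_trans natDegree_mul_le ?_
        have hx2 : (1 - (X:ℝ[X])^2).natDegree = 2 := by compute_degree!
        rw [hx2, natDegree_pow]
        omega
    have hmax := natDegree_sub_le (B0^2) ((1-X^2)*B1^2)
    rw [← hPdef] at hmax
    have := le_max_iff.1 hmax
    omega
  -- conclude B1 = 0 then B0 = 0
  have hEq : B0^2 = (1 - X^2) * B1^2 := by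
    have := hP0
    rw [hPdef, sub_eq_zero] at this
    exact this
  have hXne : (1 - (X:ℝ[X])^2) ≠ 0 := fun hc => by simpa using congrArg (eval 0) hc
  have hB1 : B1 = 0 := by
    by_contra h
    have hB0ne : B0 ≠ 0 := by
      intro h0'
      rw [h0'] at hEq
      exact (mul_ne_zero hXne (pow_ne_zero 2 h)) (by simpa using hEq.symm)
    have e1 : rootMultiplicity 1 (B0^2) = 2 * rootMultiplicity 1 B0 := by
      rw [pow_two, rootMultiplicity_mul (mul_ne_zero hB0ne hB0ne)]
      ring
    have hone : rootMultiplicity (1:ℝ) (1 - X^2) = 1 := by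
      have hfac : (1 - (X:ℝ[X])^2) = (X - C 1) * (-(X + C 1)) := by
        simp only [map_one]
        ring
      have hne : (-(X + C 1) : Polynomial ℝ) ≠ 0 := by
        intro hc
        have := congrArg (eval 0) hc
        simp at this
      rw [hfac, rootMultiplicity_mul (mul_ne_zero (X_sub_C_ne_zero 1) hne),
        rootMultiplicity_X_sub_C_self,
        rootMultiplicity_eq_zero (by simp [IsRoot])]
    have e2 : rootMultiplicity 1 ((1 - X^2) * B1^2) =
        1 + 2 * rootMultiplicity 1 B1 := by
      rw [rootMultiplicity_mul (mul_ne_zero hXne (pow_ne_zero 2 h)), hone,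
        pow_two, rootMultiplicity_mul (mul_ne_zero h h)]
      ring
    rw [hEq, e2] at e1
    omega
  have hB0 : B0 = 0 := by
    have : B0^2 = 0 := by rw [hEq, hB1]; simp
    exact pow_eq_zero_iff (by norm_num) |>.1 this
  exact ⟨hB0, hB1⟩


/-- Given `m+1` interpolation points `-1 < x_1 < ... < x_{m+1} < 1` and values
`y_j`, there is a unique function in `Ω_m` interpolating them. -/
theorem stmt_4 (m : ℕ) (x y : Fin (m + 1) → ℝ)
    (hx : StrictMono x) (hx1 : ∀ j, x j ∈ Set.Ioo (-1 : ℝ) 1) :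
    ∃ B0 B1 : Polynomial ℝ,
      (B0.degree ≤ (m : ℕ) ∧ B1.degree < (m : ℕ) ∧
        (∀ t : ℝ, B0.eval (-t) = (-1 : ℝ) ^ m * B0.eval t) ∧
        (∀ t : ℝ, B1.eval (-t) = (-1 : ℝ) ^ (m + 1) * B1.eval t) ∧
        (∀ j, B0.eval (x j) + Real.sqrt (1 - (x j) ^ 2) * B1.eval (x j) = y j)) ∧
      (∀ C0 C1 : Polynomial ℝ,
        C0.degree ≤ (m : ℕ) → C1.degree < (m : ℕ) →
        (∀ t : ℝ, C0.eval (-t) = (-1 : ℝ) ^ m * C0.eval t) →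
        (∀ t : ℝ, C1.eval (-t) = (-1 : ℝ) ^ (m + 1) * C1.eval t) →
        (∀ j, C0.eval (x j) + Real.sqrt (1 - (x j) ^ 2) * C1.eval (x j) = y j) →
        ∀ t ∈ Set.Icc (-1 : ℝ) 1,
          C0.eval t + Real.sqrt (1 - t ^ 2) * C1.eval t =
            B0.eval t + Real.sqrt (1 - t ^ 2) * B1.eval t) := by
  classical
  have hinj := hx.injective
  set A : Matrix (Fin (m+1)) (Fin (m+1)) ℝ :=
    fun j k => (if (k:ℕ) % 2 = m % 2 then 1 else Real.sqrt (1 - (x j)^2)) * (x j)^(k:ℕ) with hA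
  have hmul : ∀ (c : Fin (m+1) → ℝ) (j : Fin (m+1)),
      A.mulVec c j = (parPol m c m).eval (x j)
        + Real.sqrt (1 - (x j)^2) * (parPol m c (m+1)).eval (x j) := by
    intro c j
    rw [Matrix.mulVec, dotProduct, parPol_eval, parPol_eval, Finset.mul_sum,
      ← Finset.sum_add_distrib]
    apply Finset.sum_congr rfl
    intro k _
    by_cases h : (k:ℕ) % 2 = m % 2
    · have h2 : ¬((k:ℕ) % 2 = (m+1) % 2) := by omega
      simp only [hA, if_pos h, if_neg h2]
      ring
    · have h2 : (k:ℕ) % 2 = (m+1) % 2 := by omega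
      simp only [hA, if_neg h, if_pos h2]
      ring
  set L := Matrix.mulVecLin A with hL
  have hLinj : Function.Injective L := by
    rw [injective_iff_map_eq_zero]
    intro c hc
    have hval : ∀ j, (parPol m c m).eval (x j)
        + Real.sqrt (1 - (x j)^2) * (parPol m c (m+1)).eval (x j) = 0 := by
      intro j
      rw [← hmul c j]
      have : A.mulVec c = (0 : Fin (m+1) → ℝ) := by
        rw [← Matrix.mulVecLin_apply, ← hL, hc]
      rw [this]
      rfl
    obtain ⟨hB0, hB1⟩ := key_zero m x hinj hx1 _ _ (parPol_degree m c m)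
      (parPol_degree_lt m c) (parPol_parity m c m) (parPol_parity m c (m+1)) hval
    funext k
    by_cases h : (k:ℕ) % 2 = m % 2
    · have hco := parPol_coeff m c m k
      rw [hB0] at hco
      simpa [h] using hco.symm
    · have h2 : (k:ℕ) % 2 = (m+1) % 2 := by omega
      have hco := parPol_coeff m c (m+1) k
      rw [hB1] at hco
      simpa [h2] using hco.symm
  obtain ⟨c, hc⟩ := (LinearMap.injective_iff_surjective).1 hLinj y
  have hcval : ∀ j, (parPol m c m).eval (x j)
      + Real.sqrt (1 - (x j)^2) * (parPol m c (m+1)).eval (x j) = y j := by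
    intro j
    rw [← hmul c j]
    have : A.mulVec c = y := by rw [← Matrix.mulVecLin_apply, ← hL, hc]
    rw [this]
  refine ⟨parPol m c m, parPol m c (m+1),
    ⟨parPol_degree m c m, parPol_degree_lt m c, parPol_parity m c m,
      parPol_parity m c (m+1), hcval⟩, ?_⟩
  intro C0 C1 hC0d hC1d hC0p hC1p hCval t ht
  obtain ⟨h0, h1⟩ := key_zero m x hinj hx1 (C0 - parPol m c m) (C1 - parPol m c (m+1))
    (le_trans (degree_sub_le _ _) (max_le hC0d (parPol_degree m c m)))
    (lt_of_le_of_lt (degree_sub_le _ _) (max_lt hC1d (parPol_degree_lt m c)))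
    (fun t => by simp only [eval_sub, hC0p, parPol_parity m c m]; ring)
    (fun t => by simp only [eval_sub, hC1p, parPol_parity m c (m+1)]; ring)
    (fun j => by
      have ha := hCval j
      have hb := hcval j
      simp only [eval_sub]
      linarith)
  have e0 : C0 = parPol m c m := sub_eq_zero.1 h0
  have e1 : C1 = parPol m c (m+1) := sub_eq_zero.1 h1
  rw [e0, e1]
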